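/- Let τ > σ ≥ 1 be natural numbers and ρ₀ ≠ 0 a real number. Define q̇(θ) = ρ₀(√(τ/σ)·cos(τθ) + √(σ/τ)·cos(σθ)). Then there is no θ ∈ ℝ at which both q̇(θ) = 0 and q̇'(θ) = 0, where q̇'(θ) = −ρ₀(τ·√(τ/σ)·sin(τθ) + σ·√(σ/τ)·sin(σθ)) is the derivative of q̇; i.e., every zero of q̇ is simple. -/

import Mathlib

open Real

/-- Every zero of the resonant Lissajous velocity
`q̇(θ) = ρ₀(√(τ/σ) cos τθ + √(σ/τ) cos σθ)` is simple. -/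
theorem resonant_lissajous_velocity_zeros_simple
    (τ σ : ℕ) (hσ : 1 ≤ σ) (hτσ : σ < τ) (ρ₀ : ℝ) (hρ₀ : ρ₀ ≠ 0) :
    ¬ ∃ θ : ℝ,
        ρ₀ * (Real.sqrt ((τ : ℝ) / σ) * Real.cos (τ * θ)
            + Real.sqrt ((σ : ℝ) / τ) * Real.cos (σ * θ)) = 0 ∧
        -(ρ₀ * ((τ : ℝ) * Real.sqrt ((τ : ℝ) / σ) * Real.sin (τ * θ)
            + (σ : ℝ) * Real.sqrt ((σ : ℝ) / τ) * Real.sin (σ * θ))) = 0 := by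
  rintro ⟨θ, h1, h2⟩
  have hσ0 : (0 : ℝ) < σ := by exact_mod_cast Nat.lt_of_lt_of_le Nat.zero_lt_one hσ
  have hτ0 : (0 : ℝ) < τ := by exact_mod_cast Nat.lt_of_le_of_lt (Nat.zero_le σ) hτσ
  have hστ : (σ : ℝ) < τ := by exact_mod_cast hτσ
  set a := Real.sqrt ((τ : ℝ) / σ) with ha
  set b := Real.sqrt ((σ : ℝ) / τ) with hb
  have ha2 : a ^ 2 = (τ : ℝ) / σ := Real.sq_sqrt (by positivity)
  have hb2 : b ^ 2 = (σ : ℝ) / τ := Real.sq_sqrt (by positivity)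
  have e1 : a * Real.cos (τ * θ) + b * Real.cos (σ * θ) = 0 := by
    rcases mul_eq_zero.mp h1 with h | h
    · exact absurd h hρ₀
    · exact h
  have e2' : ρ₀ * ((τ : ℝ) * a * Real.sin (τ * θ) + (σ : ℝ) * b * Real.sin (σ * θ)) = 0 := by
    linarith [h2]
  have e2 : (τ : ℝ) * a * Real.sin (τ * θ) + (σ : ℝ) * b * Real.sin (σ * θ) = 0 := by
    rcases mul_eq_zero.mp e2' with h | h
    · exact absurd h hρ₀
    · exact h
  have hA : a * Real.cos (τ * θ) = -(b * Real.cos (σ * θ)) := by linarith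
  have hB : a * Real.sin (τ * θ) = -((σ : ℝ) / τ * (b * Real.sin (σ * θ))) := by
    field_simp
    rw [mul_comm θ (σ : ℝ)]
    linarith
  have p1 : Real.sin (τ * θ) ^ 2 + Real.cos (τ * θ) ^ 2 = 1 := Real.sin_sq_add_cos_sq _
  have p2 : Real.sin (σ * θ) ^ 2 + Real.cos (σ * θ) ^ 2 = 1 := Real.sin_sq_add_cos_sq _
  have key : (τ : ℝ) / σ ≤ (σ : ℝ) / τ := by
    have h1' : a ^ 2 = (a * Real.cos (τ * θ)) ^ 2 + (a * Real.sin (τ * θ)) ^ 2 := by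
      have : Real.cos (τ * θ) ^ 2 = 1 - Real.sin (τ * θ) ^ 2 := by linarith
      rw [mul_pow, mul_pow, this]; ring
    rw [hA, hB] at h1'
    have hfrac : ((σ : ℝ) / τ) ^ 2 ≤ 1 := by
      have : (σ : ℝ) / τ ≤ 1 := by
        rw [div_le_one hτ0]; linarith
      nlinarith [div_nonneg hσ0.le hτ0.le]
    have hstep : ((σ : ℝ) / τ) ^ 2 * (b ^ 2 * Real.sin (σ * θ) ^ 2)
        ≤ b ^ 2 * Real.sin (σ * θ) ^ 2 :=
      mul_le_of_le_one_left (by positivity) hfrac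
    calc (τ : ℝ) / σ = a ^ 2 := ha2.symm
      _ = b ^ 2 * Real.cos (σ * θ) ^ 2
          + ((σ : ℝ) / τ) ^ 2 * (b ^ 2 * Real.sin (σ * θ) ^ 2) := by
          rw [h1']; ring
      _ ≤ b ^ 2 * Real.cos (σ * θ) ^ 2 + b ^ 2 * Real.sin (σ * θ) ^ 2 := by linarith
      _ = b ^ 2 * (Real.sin (σ * θ) ^ 2 + Real.cos (σ * θ) ^ 2) := by ring
      _ = b ^ 2 := by rw [p2, mul_one]
      _ = (σ : ℝ) / τ := hb2
  have : (τ : ℝ) * τ ≤ σ * σ := by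
    have := (div_le_div_iff₀ hσ0 hτ0).mp key
    linarith
  nlinarith
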